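/- For every positive integer k and every real s ≥ k, the falling factorial [s]_k = s(s-1)⋯(s-k+1) satisfies [s]_k ≥ (s - μk)^k, where μ = (e-1)/e. -/

import Mathlib

open Finset

/-- `(k/e)^k ≤ k!`. -/
private lemma fact_ge_pow (k : ℕ) : ((k : ℝ) / Real.exp 1) ^ k ≤ (k.factorial : ℝ) := by
  have h := Real.pow_div_factorial_le_exp (x := (k : ℝ)) (by positivity) k
  have hek : Real.exp (k : ℝ) = Real.exp 1 ^ k := by
    rw [← Real.exp_nat_mul]; norm_num
  have hfac : (0 : ℝ) < (k.factorial : ℝ) := by positivity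
  have hexp : (0 : ℝ) < Real.exp 1 ^ k := by positivity
  rw [div_le_iff₀ hfac] at h
  rw [div_pow, div_le_iff₀ hexp]
  calc ((k : ℝ)) ^ k ≤ Real.exp (k : ℝ) * (k.factorial : ℝ) := h
    _ = (k.factorial : ℝ) * Real.exp 1 ^ k := by rw [hek]; ring

/-- Superadditivity of the geometric mean, specialized:
`(t + (k!)^(1/k))^k ≤ ∏_{j<k} (t + j + 1)` for `t ≥ 0`. -/
private lemma key (k : ℕ) (hk : 1 ≤ k) (t : ℝ) (ht : 0 ≤ t) :
    (t + ((k.factorial : ℝ)) ^ ((k : ℝ)⁻¹)) ^ k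
      ≤ ∏ j ∈ Finset.range k, (t + ((j : ℝ) + 1)) := by
  have hk0 : k ≠ 0 := by omega
  set P : ℝ := ∏ j ∈ Finset.range k, (t + ((j : ℝ) + 1)) with hPdef
  have hpos : ∀ j ∈ Finset.range k, (0 : ℝ) < t + ((j : ℝ) + 1) := by
    intro j _; positivity
  have hP : 0 < P := Finset.prod_pos hpos
  set Q : ℝ := P ^ ((k : ℝ)⁻¹) with hQdef
  have hQ : 0 < Q := Real.rpow_pos_of_pos hP _
  have hwsum : ∑ _j ∈ Finset.range k, (k : ℝ)⁻¹ = 1 := by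
    rw [Finset.sum_const, Finset.card_range, nsmul_eq_mul, mul_inv_cancel₀ (by positivity)]
  -- AM-GM for `t/(t+j+1)`
  have h1 := Real.geom_mean_le_arith_mean_weighted (Finset.range k)
    (fun _ => (k : ℝ)⁻¹) (fun j => t / (t + ((j : ℝ) + 1)))
    (fun i _ => by positivity) hwsum
    (fun i hi => by have := hpos i hi; positivity)
  -- AM-GM for `(j+1)/(t+j+1)`
  have h2 := Real.geom_mean_le_arith_mean_weighted (Finset.range k)
    (fun _ => (k : ℝ)⁻¹) (fun j => ((j : ℝ) + 1) / (t + ((j : ℝ) + 1)))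
    (fun i _ => by positivity) hwsum
    (fun i hi => by have := hpos i hi; positivity)
  have hprod1 : ∏ j ∈ Finset.range k, (t / (t + ((j : ℝ) + 1))) ^ ((k : ℝ)⁻¹)
      = t / Q := by
    rw [Real.finset_prod_rpow _ _ (fun i hi => by have := hpos i hi; positivity),
      Finset.prod_div_distrib, Finset.prod_const, Finset.card_range, ← hPdef,
      Real.div_rpow (by positivity) hP.le, Real.pow_rpow_inv_natCast ht hk0]
  have hfact : ∏ j ∈ Finset.range k, ((j : ℝ) + 1) = (k.factorial : ℝ) := by
    rw [← Finset.prod_range_add_one_eq_factorial k]; push_cast; ring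
  have hprod2 : ∏ j ∈ Finset.range k, (((j : ℝ) + 1) / (t + ((j : ℝ) + 1))) ^ ((k : ℝ)⁻¹)
      = (k.factorial : ℝ) ^ ((k : ℝ)⁻¹) / Q := by
    rw [Real.finset_prod_rpow _ _ (fun i hi => by have := hpos i hi; positivity),
      Finset.prod_div_distrib, hfact, ← hPdef, Real.div_rpow (by positivity) hP.le]
  rw [hprod1] at h1
  rw [hprod2] at h2
  have hsum : (∑ j ∈ Finset.range k, (k : ℝ)⁻¹ * (t / (t + ((j : ℝ) + 1))))
      + (∑ j ∈ Finset.range k, (k : ℝ)⁻¹ * (((j : ℝ) + 1) / (t + ((j : ℝ) + 1)))) = 1 := by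
    rw [← Finset.sum_add_distrib, ← hwsum]
    apply Finset.sum_congr rfl
    intro j hj
    have h0 := (hpos j hj).ne'
    field_simp
  have hle : t / Q + (k.factorial : ℝ) ^ ((k : ℝ)⁻¹) / Q ≤ 1 := by
    calc t / Q + (k.factorial : ℝ) ^ ((k : ℝ)⁻¹) / Q
        ≤ _ + _ := add_le_add h1 h2
      _ = 1 := hsum
  have hTG : t + (k.factorial : ℝ) ^ ((k : ℝ)⁻¹) ≤ Q := by
    rw [← add_div, div_le_one hQ] at hle
    exact hle
  calc (t + ((k.factorial : ℝ)) ^ ((k : ℝ)⁻¹)) ^ k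
      ≤ Q ^ k := pow_le_pow_left₀ (by positivity) hTG k
    _ = P := Real.rpow_inv_natCast_pow hP.le hk0

/-- For every positive integer `k` and real `s ≥ k`, the falling factorial
`[s]_k` satisfies `[s]_k ≥ (s - μk)^k` with `μ = (e-1)/e`. -/
theorem falling_factorial_ge_mu (k : ℕ) (hk : 1 ≤ k) (s : ℝ) (hs : (k : ℝ) ≤ s) :
    (s - (Real.exp 1 - 1) / Real.exp 1 * (k : ℝ)) ^ k ≤
      ∏ i ∈ Finset.range k, (s - (i : ℝ)) := by
  have hk0 : k ≠ 0 := by omega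
  set t : ℝ := s - k with htdef
  have ht : 0 ≤ t := by simp [htdef]; linarith
  have he : Real.exp 1 ≠ 0 := Real.exp_ne_zero 1
  -- rewrite the base
  have hbase : s - (Real.exp 1 - 1) / Real.exp 1 * (k : ℝ) = t + (k : ℝ) / Real.exp 1 := by
    rw [htdef]; field_simp; ring
  -- reindex the product
  have hreindex : ∏ i ∈ Finset.range k, (s - (i : ℝ))
      = ∏ j ∈ Finset.range k, (t + ((j : ℝ) + 1)) := by
    rw [← Finset.prod_range_reflect (fun i => s - (i : ℝ)) k]
    apply Finset.prod_congr rfl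
    intro j hj
    have hjk : j < k := Finset.mem_range.mp hj
    have h1 : (↑(k - 1 - j) : ℝ) = (k : ℝ) - 1 - j := by
      push_cast [Nat.cast_sub (by omega : 1 + j ≤ k), Nat.sub_sub]; ring
    rw [h1, htdef]; ring
  -- `k/e ≤ (k!)^(1/k)`
  have hGe : (k : ℝ) / Real.exp 1 ≤ (k.factorial : ℝ) ^ ((k : ℝ)⁻¹) := by
    have := Real.rpow_le_rpow (by positivity) (fact_ge_pow k) (by positivity : (0:ℝ) ≤ (k:ℝ)⁻¹)
    rwa [Real.pow_rpow_inv_natCast (by positivity) hk0] at this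
  rw [hbase, hreindex]
  calc (t + (k : ℝ) / Real.exp 1) ^ k
      ≤ (t + (k.factorial : ℝ) ^ ((k : ℝ)⁻¹)) ^ k := by
        apply pow_le_pow_left₀ (by positivity) (by linarith) k
    _ ≤ ∏ j ∈ Finset.range k, (t + ((j : ℝ) + 1)) := key k hk t ht
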